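/- Unbiasedness of the weighted difference in means for the SATT: if (i) E[Y_{0i} | X_i = x] = φ(x)ᵀθ for all x, and (ii) the weights satisfy exact feature balance (1/N1)∑_{D_i=1} φ(X_i) = ∑_{D_i=0} w_i φ(X_i), then E[DIM_w − SATT] = 0, where DIM_w = (1/N1)∑_{D_i=1} Y_i − ∑_{D_i=0} w_i Y_i. -/

import Mathlib

open Finset MeasureTheory Matrix

/-- Unbiasedness of the weighted difference in means for the SATT: if
E[Y0|X=x] = φ(x)ᵀθ (i.e. Y0ᵢ = φ(Xᵢ)ᵀθ + εᵢ with E[εᵢ|Xᵢ]=0) and the weights achieve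
exact feature balance on φ, then E[DIM_w − SATT] = 0. -/
theorem weighted_dim_unbiased_for_satt {N P Q : ℕ} {Ω : Type*} [MeasurableSpace Ω]
    (μ : Measure Ω) [IsProbabilityMeasure μ]
    (D : Fin N → Bool) (X : Fin N → (Fin P → ℝ))
    (φ : (Fin P → ℝ) → (Fin Q → ℝ)) (θ : Fin Q → ℝ)
    (ε : Fin N → Ω → ℝ) (hint : ∀ i, Integrable (ε i) μ)
    (hε : ∀ i, ∫ ω, ε i ω ∂μ = 0)
    (Y0 Y1 Y : Fin N → Ω → ℝ)
    (hY0 : ∀ i ω, Y0 i ω = φ (X i) ⬝ᵥ θ + ε i ω)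
    (hY : ∀ i ω, Y i ω = if D i then Y1 i ω else Y0 i ω)
    (w : Fin N → ℝ) (hw : ∀ i, 0 ≤ w i)
    (hw1 : ∑ i ∈ univ.filter (fun i => D i = false), w i = 1)
    (N1 : ℕ) (hN1 : N1 = (univ.filter fun i => D i = true).card) (hN1pos : 0 < N1)
    (hbal : ∀ q, (1 / (N1 : ℝ)) * ∑ i ∈ univ.filter (fun i => D i = true), φ (X i) q
        = ∑ i ∈ univ.filter (fun i => D i = false), w i * φ (X i) q) :
    ∫ ω, (((1 / (N1 : ℝ)) * ∑ i ∈ univ.filter (fun i => D i = true), Y i ω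
            - ∑ i ∈ univ.filter (fun i => D i = false), w i * Y i ω)
          - (1 / (N1 : ℝ)) * ∑ i ∈ univ.filter (fun i => D i = true), (Y1 i ω - Y0 i ω))
        ∂μ = 0 := by
  set T := univ.filter (fun i : Fin N => D i = true) with hT
  set C := univ.filter (fun i : Fin N => D i = false) with hC
  have hsum : ∀ s : Finset (Fin N), ∑ i ∈ s, φ (X i) ⬝ᵥ θ
      = ∑ q, (∑ i ∈ s, φ (X i) q) * θ q := by
    intro s
    simp only [dotProduct]
    rw [Finset.sum_comm]
    simp [Finset.sum_mul]
  have hbal' : (1 / (N1 : ℝ)) * ∑ i ∈ T, φ (X i) ⬝ᵥ θ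
      = ∑ i ∈ C, w i * (φ (X i) ⬝ᵥ θ) := by
    rw [hsum, Finset.mul_sum]
    have : ∑ i ∈ C, w i * (φ (X i) ⬝ᵥ θ)
        = ∑ q, (∑ i ∈ C, w i * φ (X i) q) * θ q := by
      simp only [dotProduct, Finset.mul_sum]
      rw [Finset.sum_comm]
      simp [Finset.sum_mul, mul_assoc]
    rw [this]
    refine Finset.sum_congr rfl fun q _ => ?_
    rw [← mul_assoc, hbal q]
  have key : ∀ ω, (((1 / (N1 : ℝ)) * ∑ i ∈ T, Y i ω
            - ∑ i ∈ C, w i * Y i ω)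
          - (1 / (N1 : ℝ)) * ∑ i ∈ T, (Y1 i ω - Y0 i ω))
      = (1 / (N1 : ℝ)) * ∑ i ∈ T, ε i ω - ∑ i ∈ C, w i * ε i ω := by
    intro ω
    have hTY : ∀ i ∈ T, Y i ω = Y1 i ω := by
      intro i hi
      rw [hY]
      simp only [hT, Finset.mem_filter] at hi
      simp [hi.2]
    have hCY : ∀ i ∈ C, Y i ω = Y0 i ω := by
      intro i hi
      rw [hY]
      simp only [hC, Finset.mem_filter] at hi
      simp [hi.2]
    have eT : ∑ i ∈ T, Y i ω = ∑ i ∈ T, Y1 i ω := Finset.sum_congr rfl hTY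
    have eC : ∑ i ∈ C, w i * Y i ω = ∑ i ∈ C, w i * Y0 i ω :=
      Finset.sum_congr rfl fun i hi => by rw [hCY i hi]
    rw [eT, eC]
    have e1 : ∑ i ∈ T, (Y1 i ω - Y0 i ω) = ∑ i ∈ T, Y1 i ω - ∑ i ∈ T, Y0 i ω :=
      Finset.sum_sub_distrib _ _
    have e2 : ∀ s : Finset (Fin N), ∑ i ∈ s, Y0 i ω
        = ∑ i ∈ s, φ (X i) ⬝ᵥ θ + ∑ i ∈ s, ε i ω := by
      intro s
      simp [hY0, Finset.sum_add_distrib]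
    have e3 : ∑ i ∈ C, w i * Y0 i ω
        = ∑ i ∈ C, w i * (φ (X i) ⬝ᵥ θ) + ∑ i ∈ C, w i * ε i ω := by
      simp [hY0, mul_add, Finset.sum_add_distrib]
    rw [e1, e2, e3]
    have := hbal'
    ring_nf
    ring_nf at this
    linarith
  rw [integral_congr_ae (Filter.Eventually.of_forall key)]
  have h1 : Integrable (fun ω => ∑ i ∈ T, ε i ω) μ :=
    integrable_finset_sum _ fun i _ => hint i
  have h2 : Integrable (fun ω => ∑ i ∈ C, w i * ε i ω) μ :=
    integrable_finset_sum _ fun i _ => (hint i).const_mul _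
  rw [integral_sub (h1.const_mul _) h2, integral_const_mul,
    integral_finset_sum _ fun i _ => hint i,
    integral_finset_sum _ fun i _ => (hint i).const_mul _]
  simp [integral_const_mul, hε]
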